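/- Let L be a field of characteristic ≠ 2, and let α, β, x₀, x, u, v ∈ L with α ≠ β, x₀ ≠ α, x₀ ≠ β. Set c_α = x₀ − α and c_β = x₀ − β, and assume c_α·u² = x − α and c_β·v² = x − β. Then (1 + (c_α·u − c_β·v)/(α − β)) · (1 + (c_α·u − c_β·v)/(β − α)) = −c_α·c_β·(u − v)²/(α − β)². In particular this product equals −c_α·c_β times a square of L. -/

import Mathlib

/-- Product identity for the two lifts appearing in the nonabelian `(x − T)` map:
with `c_α = x₀ − α`, `c_β = x₀ − β`, `c_α·u² = x − α` and `c_β·v² = x − β`, one has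
`(1 + (c_αu − c_βv)/(α−β))·(1 + (c_αu − c_βv)/(β−α)) = −c_αc_β(u−v)²/(α−β)²`;
in particular this product is `−c_αc_β` times a square. -/
theorem nonabelian_xT_product {L : Type*} [Field L] (hchar : (2 : L) ≠ 0)
    (α β x₀ x u v : L) (hαβ : α ≠ β) (h₀α : x₀ ≠ α) (h₀β : x₀ ≠ β)
    (hu : (x₀ - α) * u ^ 2 = x - α) (hv : (x₀ - β) * v ^ 2 = x - β) :
    (1 + ((x₀ - α) * u - (x₀ - β) * v) / (α - β)) *
        (1 + ((x₀ - α) * u - (x₀ - β) * v) / (β - α)) =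
      -((x₀ - α) * (x₀ - β)) * (u - v) ^ 2 / (α - β) ^ 2 ∧
    ∃ w : L,
      (1 + ((x₀ - α) * u - (x₀ - β) * v) / (α - β)) *
          (1 + ((x₀ - α) * u - (x₀ - β) * v) / (β - α)) =
        -((x₀ - α) * (x₀ - β)) * w ^ 2 := by
  have hab : α - β ≠ 0 := sub_ne_zero.mpr hαβ
  have hmain : (1 + ((x₀ - α) * u - (x₀ - β) * v) / (α - β)) *
        (1 + ((x₀ - α) * u - (x₀ - β) * v) / (β - α)) =
      -((x₀ - α) * (x₀ - β)) * (u - v) ^ 2 / (α - β) ^ 2 := by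
    have hba : β - α ≠ 0 := sub_ne_zero.mpr hαβ.symm
    have key : (α-β)^2 - ((x₀-α)*u - (x₀-β)*v)^2 = -((x₀-α)*(x₀-β))*(u-v)^2 := by
      linear_combination (α-β)*hu + (β-α)*hv
    field_simp
    linear_combination (-(α-β)) * key
  exact ⟨hmain, (u - v) / (α - β), by rw [hmain, div_pow, mul_div_assoc]⟩
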